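/- Let W = {(u_1,…,u_n) ∈ K^n : u_n = 0 and u_1⋯u_{n−1} = 0}. Then the restriction of φ to K^n ∖ W is injective, and its image is V ∖ φ(W); that is, φ restricts to a bijection from K^n ∖ W onto V ∖ φ(W). -/

import Mathlib

open MvPolynomial

/-- The parametrization map `φ : K^n → K^{2n}` of the toric variety `V`. -/
noncomputable def phiMap {K : Type*} [Field K] (n : ℕ)
    (d f g h : Fin (n - 1) → ℕ) (u : Fin n → K) : Fin n ⊕ Fin n → K :=
  Sum.elim
    (fun i => if hi : i.1 < n - 1 then u i ^ d ⟨i.1, hi⟩ else u i)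
    (fun i =>
      if hi : i.1 < n - 1 then
        u i ^ f ⟨i.1, hi⟩ * u ⟨n - 1, by have := i.isLt; omega⟩ ^ g ⟨i.1, hi⟩
      else ∏ j : Fin (n - 1), u (Fin.castLE (by omega) j) ^ h j)

lemma aux_pow_eq_one {K : Type*} [Monoid K] {t : K} {a b : ℕ}
    (hab : Nat.Coprime a b) (h1 : t ^ a = 1) (h2 : t ^ b = 1) : t = 1 := by
  have h3 : orderOf t ∣ Nat.gcd a b :=
    Nat.dvd_gcd (orderOf_dvd_of_pow_eq_one h1) (orderOf_dvd_of_pow_eq_one h2)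
  rw [hab] at h3
  exact orderOf_eq_one_iff.mp (Nat.dvd_one.mp h3)

lemma aux_eq_of_pow_eq {K : Type*} [Field K] {x y : K} {a b : ℕ} (ha : 0 < a)
    (hab : Nat.Coprime a b) (h1 : x ^ a = y ^ a) (h2 : x ^ b = y ^ b) : x = y := by
  by_cases hy : y = 0
  · subst hy
    rw [zero_pow ha.ne'] at h1
    exact pow_eq_zero_iff ha.ne' |>.mp h1
  · have hya : y ^ a ≠ 0 := pow_ne_zero _ hy
    have hyb : y ^ b ≠ 0 := pow_ne_zero _ hy
    have t1 : (x / y) ^ a = 1 := by rw [div_pow, h1, div_self hya]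
    have t2 : (x / y) ^ b = 1 := by rw [div_pow, h2, div_self hyb]
    exact (div_eq_one_iff_eq hy).mp (aux_pow_eq_one hab t1 t2)

lemma aux_key {K : Type*} [Field K] {N : ℕ} (d h : Fin N → ℕ)
    (hdh : ∀ i, Nat.Coprime (d i) (h i))
    (hdd : ∀ i j, i ≠ j → Nat.Coprime (d i) (d j))
    (t : Fin N → K) (h1 : ∀ i, t i ^ d i = 1) (h2 : ∏ i, t i ^ h i = 1) :
    ∀ i, t i = 1 := by
  intro j
  set m := ∏ i ∈ Finset.univ.erase j, d i with hm
  have hmi : ∀ i ∈ Finset.univ.erase j, t i ^ m = 1 := by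
    intro i hi
    rw [hm, ← Finset.mul_prod_erase _ _ hi, pow_mul, h1 i, one_pow]
  have hprod : t j ^ (h j * m) = 1 := by
    have : ∏ i, (t i ^ h i) ^ m = 1 := by
      rw [Finset.prod_pow, h2, one_pow]
    rw [Fintype.prod_eq_single j (fun i hij => by
      rw [← pow_mul, mul_comm, pow_mul,
        hmi i (Finset.mem_erase.mpr ⟨hij, Finset.mem_univ i⟩), one_pow])] at this
    rwa [← pow_mul] at this
  have hcop : Nat.Coprime (d j) (h j * m) := by
    refine (hdh j).mul_right ?_
    exact Nat.Coprime.prod_right fun i hi => hdd j i (Finset.mem_erase.mp hi).1.symm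
  exact aux_pow_eq_one hcop (h1 j) hprod

section coords
variable {K : Type*} [Field K] {n : ℕ} (d f g h : Fin (n - 1) → ℕ)
  (w : Fin n → K)

lemma phi_coord1 (j : Fin (n - 1)) :
    phiMap n d f g h w (Sum.inl (Fin.castLE (Nat.sub_le n 1) j))
      = w (Fin.castLE (Nat.sub_le n 1) j) ^ d j := by
  simp only [phiMap, Sum.elim_inl]
  rw [dif_pos (show (Fin.castLE (Nat.sub_le n 1) j).1 < n - 1 from j.isLt)]
  rfl

lemma phi_coord2 (hn : 1 ≤ n) :
    phiMap n d f g h w (Sum.inl ⟨n - 1, by omega⟩) = w ⟨n - 1, by omega⟩ := by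
  simp only [phiMap, Sum.elim_inl]
  rw [dif_neg (by simp)]

lemma phi_coord3 (hn : 1 ≤ n) (j : Fin (n - 1)) :
    phiMap n d f g h w (Sum.inr (Fin.castLE (Nat.sub_le n 1) j))
      = w (Fin.castLE (Nat.sub_le n 1) j) ^ f j * w ⟨n - 1, by omega⟩ ^ g j := by
  simp only [phiMap, Sum.elim_inr]
  rw [dif_pos (show (Fin.castLE (Nat.sub_le n 1) j).1 < n - 1 from j.isLt)]
  rfl

lemma phi_coord4 (hn : 1 ≤ n) :
    phiMap n d f g h w (Sum.inr ⟨n - 1, by omega⟩)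
      = ∏ j : Fin (n - 1), w (Fin.castLE (Nat.sub_le n 1) j) ^ h j := by
  simp only [phiMap, Sum.elim_inr]
  rw [dif_neg (by simp)]

end coords

/-- Let `W = {u ∈ K^n : u_n = 0 and u_1 ⋯ u_{n-1} = 0}`. Then `φ` restricts to a
bijection from `K^n ∖ W` onto `V ∖ φ(W)`: it is injective on `K^n ∖ W` and its
image is `V ∖ φ(W)`. -/
theorem toric_phi_bijective_off_W
    (K : Type*) [Field K] [IsAlgClosed K]
    (n : ℕ) (hn : 3 ≤ n)
    (d f g h : Fin (n - 1) → ℕ)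
    (hd : ∀ i, 0 < d i) (hf : ∀ i, 0 < f i) (hg : ∀ i, 0 < g i) (hh : ∀ i, 0 < h i)
    (hdf : ∀ i, Nat.Coprime (d i) (f i))
    (hdh : ∀ i, Nat.Coprime (d i) (h i))
    (hdd : ∀ i j, i ≠ j → Nat.Coprime (d i) (d j)) :
    ∀ W : Set (Fin n → K),
      W = {u : Fin n → K | u ⟨n - 1, by omega⟩ = 0 ∧
            ∏ i : Fin (n - 1), u (Fin.castLE (by omega) i) = 0} →
      Set.InjOn (phiMap n d f g h) Wᶜ ∧
      phiMap n d f g h '' Wᶜ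
        = Set.range (phiMap n d f g h) \ phiMap n d f g h '' W := by
  intro W hW
  have hn1 : 1 ≤ n := by omega
  -- abbreviations
  set L : Fin n := ⟨n - 1, by omega⟩ with hLdef
  set c : Fin (n - 1) → Fin n := Fin.castLE (Nat.sub_le n 1) with hcdef
  -- membership in W, phrased with our proof terms (defeq)
  have hWmem : ∀ u : Fin n → K,
      u ∈ W ↔ (u L = 0 ∧ ∏ i : Fin (n - 1), u (c i) = 0) := by
    intro u; rw [hW]; exact Iff.rfl
  -- coordinate extraction
  have coords : ∀ u v : Fin n → K, phiMap n d f g h u = phiMap n d f g h v →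
      (u L = v L) ∧ (∀ j, u (c j) ^ d j = v (c j) ^ d j) ∧
      (∀ j, u (c j) ^ f j * u L ^ g j = v (c j) ^ f j * v L ^ g j) ∧
      (∏ j, u (c j) ^ h j = ∏ j, v (c j) ^ h j) := by
    intro u v huv
    refine ⟨?_, fun j => ?_, fun j => ?_, ?_⟩
    · have := congrFun huv (Sum.inl L)
      rwa [phi_coord2 d f g h u hn1, phi_coord2 d f g h v hn1] at this
    · have := congrFun huv (Sum.inl (c j))
      rwa [phi_coord1 d f g h u j, phi_coord1 d f g h v j] at this
    · have := congrFun huv (Sum.inr (c j))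
      rwa [phi_coord3 d f g h u hn1 j, phi_coord3 d f g h v hn1 j] at this
    · have := congrFun huv (Sum.inr L)
      rwa [phi_coord4 d f g h u hn1, phi_coord4 d f g h v hn1] at this
  -- injectivity on Wᶜ
  have inj : Set.InjOn (phiMap n d f g h) Wᶜ := by
    intro u hu v hv huv
    rw [Set.mem_compl_iff, hWmem, not_and] at hu hv
    obtain ⟨hL, h1, h2, h3⟩ := coords u v huv
    have hall : ∀ j : Fin (n - 1), u (c j) = v (c j) := by
      intro j
      by_cases hz : u L = 0
      · -- here all the u_i and v_i are nonzero
        have hvz : v L = 0 := hL ▸ hz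
        have hu2 : ∏ i, u (c i) ≠ 0 := hu hz
        have hv2 : ∏ i, v (c i) ≠ 0 := hv hvz
        have hun : ∀ i, u (c i) ≠ 0 := fun i h0 =>
          hu2 (Finset.prod_eq_zero (Finset.mem_univ i) h0)
        have hvn : ∀ i, v (c i) ≠ 0 := fun i h0 =>
          hv2 (Finset.prod_eq_zero (Finset.mem_univ i) h0)
        have key := aux_key d h hdh hdd (fun i => u (c i) / v (c i))
          (fun i => by rw [div_pow, h1 i, div_self (pow_ne_zero _ (hvn i))])
          (by
            have : ∏ i, (u (c i) ^ h i / v (c i) ^ h i)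
                = (∏ i, u (c i) ^ h i) / ∏ i, v (c i) ^ h i :=
              Finset.prod_div_distrib _ _
            simp only [div_pow]
            rw [this, h3, div_self]
            exact Finset.prod_ne_zero_iff.mpr fun i _ => pow_ne_zero _ (hvn i))
        exact (div_eq_one_iff_eq (hvn j)).mp (key j)
      · -- here u_n = v_n ≠ 0
        have hvLz : v L ≠ 0 := hL ▸ hz
        have h2' : u (c j) ^ f j = v (c j) ^ f j := by
          have := h2 j
          rw [hL] at this
          exact mul_right_cancel₀ (pow_ne_zero _ hvLz) this
        exact aux_eq_of_pow_eq (hd j) (hdf j) (h1 j) h2'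
    funext i
    by_cases hi : i.1 < n - 1
    · exact hall ⟨i.1, hi⟩
    · have : i = L := Fin.ext (by have := i.isLt; simp only [hLdef]; omega)
      rw [this]; exact hL
  -- disjointness of the images
  have disj : ∀ u, u ∉ W → ∀ v, v ∈ W →
      phiMap n d f g h u ≠ phiMap n d f g h v := by
    intro u hu v hv heq
    rw [hWmem, not_and] at hu
    rw [hWmem] at hv
    obtain ⟨hL, _, _, h3⟩ := coords u v heq
    obtain ⟨hv1, hv2⟩ := hv
    have huL : u L = 0 := hL.trans hv1
    have hu2 : ∏ i, u (c i) ≠ 0 := hu huL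
    have hun : ∀ i, u (c i) ≠ 0 := fun i h0 =>
      hu2 (Finset.prod_eq_zero (Finset.mem_univ i) h0)
    obtain ⟨i, -, hi0⟩ := Finset.prod_eq_zero_iff.mp hv2
    have hz : ∏ j, v (c j) ^ h j = 0 :=
      Finset.prod_eq_zero (Finset.mem_univ i) (by rw [hi0, zero_pow (hh i).ne'])
    rw [← h3] at hz
    exact (Finset.prod_ne_zero_iff.mpr fun i _ => pow_ne_zero _ (hun i)) hz
  refine ⟨inj, ?_⟩
  ext x
  simp only [Set.mem_diff, Set.mem_image, Set.mem_range, Set.mem_compl_iff]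
  constructor
  · rintro ⟨u, hu, rfl⟩
    exact ⟨⟨u, rfl⟩, fun ⟨v, hv, hvx⟩ => disj u hu v hv hvx.symm⟩
  · rintro ⟨⟨u, rfl⟩, hx⟩
    by_cases hu : u ∈ W
    · exact absurd ⟨u, hu, rfl⟩ hx
    · exact ⟨u, hu, rfl⟩
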